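/- For every k ∈ ℕ, with λ_ε = λ̂ (log(1/ε))^{-1/2} and N_ε = ⌊log₂(1/ε)⌋, the quantity λ_ε^{2(k+1)} · | ∑_{n=K}^{N_ε - 1} (N_ε - n)^k − (N_ε − K)^{k+1}/(k+1) | tends to 0 as ε → 0, uniformly over K ∈ {0, …, N_ε − 1}. -/

import Mathlib

open Finset


lemma pow_diff_bounds (k : ℕ) (y : ℝ) (hy : 0 ≤ y) :
    (k+1 : ℝ) * y ^ k ≤ (y+1) ^ (k+1) - y ^ (k+1) ∧
    (y+1) ^ (k+1) - y ^ (k+1) ≤ (k+1 : ℝ) * (y+1) ^ k := by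
  have hxy : (y+1) - y = 1 := by ring
  have hgeom := geom_sum₂_mul (y+1) y (k+1)
  rw [hxy, mul_one] at hgeom
  have hterm : ∀ i ∈ range (k+1), y ^ k ≤ (y+1) ^ i * y ^ (k+1-1-i) ∧
      (y+1) ^ i * y ^ (k+1-1-i) ≤ (y+1) ^ k := by
    intro i hi
    have hik : i ≤ k := Nat.lt_succ_iff.mp (mem_range.mp hi)
    have h1 : k+1-1-i = k-i := by omega
    rw [h1]
    constructor
    · calc y ^ k = y ^ i * y ^ (k - i) := by rw [← pow_add, Nat.add_sub_cancel' hik]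
        _ ≤ (y+1) ^ i * y ^ (k-i) :=
          mul_le_mul_of_nonneg_right (pow_le_pow_left₀ hy (by linarith) i) (pow_nonneg hy _)
    · calc (y+1) ^ i * y ^ (k-i) ≤ (y+1) ^ i * (y+1) ^ (k-i) :=
          mul_le_mul_of_nonneg_left (pow_le_pow_left₀ hy (by linarith) _) (pow_nonneg (by linarith) _)
        _ = (y+1) ^ k := by rw [← pow_add, Nat.add_sub_cancel' hik]
  constructor
  · rw [← hgeom]
    calc (k+1 : ℝ) * y ^ k = ∑ _i ∈ range (k+1), y ^ k := by
          rw [Finset.sum_const, card_range]; push_cast; ring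
      _ ≤ _ := Finset.sum_le_sum fun i hi => (hterm i hi).1
  · rw [← hgeom]
    calc ∑ i ∈ range (k+1), (y+1) ^ i * y ^ (k+1-1-i) ≤ ∑ _i ∈ range (k+1), (y+1) ^ k :=
          Finset.sum_le_sum fun i hi => (hterm i hi).2
      _ = (k+1 : ℝ) * (y+1) ^ k := by rw [Finset.sum_const, card_range]; push_cast; ring

lemma sum_pow_est (k M : ℕ) :
    |(∑ m ∈ range M, ((m+1 : ℕ) : ℝ) ^ k) - (M : ℝ) ^ (k+1) / (k+1)| ≤ (M : ℝ) ^ k := by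
  have hk : (0:ℝ) < k + 1 := by positivity
  set f : ℕ → ℝ := fun m => (m : ℝ) ^ (k+1) / (k+1) with hf
  have htel : ∑ m ∈ range M, (f (m+1) - f m) = f M := by
    rw [Finset.sum_range_sub f M]
    simp [hf]
  have hbd : ∀ m : ℕ, (m:ℝ) ^ k ≤ f (m+1) - f m ∧ f (m+1) - f m ≤ ((m+1:ℕ) : ℝ) ^ k := by
    intro m
    obtain ⟨h1, h2⟩ := pow_diff_bounds k (m:ℝ) (Nat.cast_nonneg m)
    have : f (m+1) - f m = (((m:ℝ)+1) ^ (k+1) - (m:ℝ) ^ (k+1)) / (k+1) := by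
      simp [hf]; push_cast; ring
    rw [this]
    constructor
    · rw [le_div_iff₀ hk]; linarith
    · rw [div_le_iff₀ hk]; push_cast; linarith
  rw [abs_le]
  constructor
  · have : f M ≤ ∑ m ∈ range M, ((m+1:ℕ):ℝ) ^ k := by
      rw [← htel]
      exact Finset.sum_le_sum fun m _ => (hbd m).2
    have hMk : (0:ℝ) ≤ (M:ℝ) ^ k := by positivity
    simp only [hf] at this ⊢
    linarith
  · have h2 : ∑ m ∈ range M, (((m+1:ℕ):ℝ) ^ k - (f (m+1) - f m))
        ≤ ∑ m ∈ range M, (((m+1:ℕ):ℝ) ^ k - (m:ℝ) ^ k) := by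
      exact Finset.sum_le_sum fun m _ => by linarith [(hbd m).1]
    have h3 : ∑ m ∈ range M, (((m+1:ℕ):ℝ) ^ k - (m:ℝ) ^ k) = (M:ℝ)^k - (0:ℝ)^k := by
      have := Finset.sum_range_sub (fun m : ℕ => (m:ℝ) ^ k) M
      simpa using this
    rw [Finset.sum_sub_distrib, htel] at h2
    have h0 : (0:ℝ) ≤ (0:ℝ)^k := by positivity
    simp only [hf] at h2 ⊢
    linarith

lemma reindex (K N k : ℕ) (hK : K ≤ N) :
    ∑ n ∈ Finset.Ico K N, ((N - n : ℕ) : ℝ) ^ k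
      = ∑ m ∈ range (N - K), ((m+1 : ℕ) : ℝ) ^ k := by
  rw [Finset.sum_Ico_eq_sum_range,
    ← Finset.sum_range_reflect (fun i => ((i+1 : ℕ) : ℝ) ^ k) (N - K)]
  apply Finset.sum_congr rfl
  intro i hi
  have hi' : i < N - K := mem_range.mp hi
  have : N - (K + i) = N - K - 1 - i + 1 := by omega
  rw [this]

/-- Lemma `lem_logsum`: with `λ_ε = λ̂ (log(1/ε))^{-1/2}` and `N_ε = ⌊log₂(1/ε)⌋`,
`λ_ε^{2(k+1)} |∑_{n=K}^{N_ε-1} (N_ε-n)^k - (N_ε-K)^{k+1}/(k+1)| → 0` as `ε → 0`,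
uniformly over `K ∈ {0, …, N_ε - 1}`. -/
theorem stmt2 (k : ℕ) (lamhat : ℝ) :
    ∀ δ > (0:ℝ), ∃ ε₀ > (0:ℝ), ∀ ε : ℝ, 0 < ε → ε < ε₀ → ε < 1 →
      ∀ K : ℕ, K < (⌊Real.logb 2 (1 / ε)⌋).toNat →
        (lamhat * Real.log (1 / ε) ^ (-(1/2 : ℝ))) ^ (2 * (k + 1)) *
            |(∑ n ∈ Finset.Ico K (⌊Real.logb 2 (1 / ε)⌋).toNat,
                ((((⌊Real.logb 2 (1 / ε)⌋).toNat - n : ℕ) : ℝ)) ^ k) -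
              (((⌊Real.logb 2 (1 / ε)⌋).toNat : ℝ) - (K : ℝ)) ^ (k + 1) / (k + 1)|
          < δ := by
  intro δ hδ
  set c : ℝ := Real.log 2 with hc
  have hc0 : 0 < c := Real.log_pos one_lt_two
  set A : ℝ := lamhat ^ 2 with hA
  set B : ℝ := A ^ (k+1) / c ^ k with hB
  have hB0 : 0 ≤ B := by positivity
  refine ⟨min 1 (Real.exp (-(B/δ + 1))), lt_min one_pos (Real.exp_pos _), ?_⟩
  intro ε hε hε0 hε1 K hK
  set N : ℕ := (⌊Real.logb 2 (1 / ε)⌋).toNat with hN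
  set L : ℝ := Real.log (1/ε) with hL
  -- L > B/δ + 1
  have hinv : Real.exp (B/δ + 1) < 1/ε := by
    have h1 : ε < Real.exp (-(B/δ + 1)) := lt_of_lt_of_le hε0 (min_le_right _ _)
    rw [Real.exp_neg] at h1
    rw [lt_div_iff₀ hε]
    calc Real.exp (B/δ + 1) * ε < Real.exp (B/δ + 1) * (Real.exp (B/δ+1))⁻¹ :=
          mul_lt_mul_of_pos_left h1 (Real.exp_pos _)
      _ = 1 := mul_inv_cancel₀ (ne_of_gt (Real.exp_pos _))
  have hLbig : B/δ + 1 < L := by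
    have := Real.log_lt_log (Real.exp_pos _) hinv
    rwa [Real.log_exp] at this
  have hL0 : 0 < L := lt_of_le_of_lt (by positivity) hLbig
  -- factor simplification
  have hfac : (lamhat * L ^ (-(1/2 : ℝ))) ^ (2 * (k + 1)) = (A * L⁻¹) ^ (k+1) := by
    rw [pow_mul, mul_pow]
    congr 1
    congr 1
    rw [← Real.rpow_natCast (L ^ (-(1/2):ℝ)) 2, ← Real.rpow_mul hL0.le]
    norm_num [Real.rpow_neg_one]
  -- N ≤ L / c
  have hKN : K ≤ N := le_of_lt hK
  have hNle : (N : ℝ) ≤ L / c := by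
    have hlogb0 : 0 ≤ Real.logb 2 (1/ε) := by
      apply Real.logb_nonneg one_lt_two
      rw [le_div_iff₀ hε]; linarith
    have h1 : ((N:ℤ) : ℝ) ≤ Real.logb 2 (1/ε) := by
      rw [hN, Int.toNat_of_nonneg (Int.floor_nonneg.mpr hlogb0)]
      exact Int.floor_le _
    rw [Real.logb, hL, hc] at *
    exact_mod_cast h1
  set M : ℕ := N - K with hM
  have hMle : (M : ℝ) ≤ L / c := le_trans (by exact_mod_cast Nat.cast_le.mpr (Nat.sub_le N K)) hNle
  have hcast : ((N:ℝ) - (K:ℝ)) = ((M : ℕ) : ℝ) := by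
    rw [hM]; push_cast [Nat.cast_sub hKN]; ring
  rw [hfac, reindex K N k hKN, hcast]
  have habs := sum_pow_est k M
  have hfac0 : (0:ℝ) ≤ (A * L⁻¹) ^ (k+1) := by positivity
  calc (A * L⁻¹) ^ (k+1) * |(∑ m ∈ range M, ((m+1 : ℕ) : ℝ) ^ k) - (M:ℝ) ^ (k+1) / (k+1)|
      ≤ (A * L⁻¹) ^ (k+1) * (M:ℝ) ^ k := by
        apply mul_le_mul_of_nonneg_left habs hfac0
    _ ≤ (A * L⁻¹) ^ (k+1) * (L/c) ^ k := by
        apply mul_le_mul_of_nonneg_left _ hfac0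
        exact pow_le_pow_left₀ (Nat.cast_nonneg M) hMle k
    _ = B / L := by
        rw [hB]
        have hLne := hL0.ne'
        have hcne := hc0.ne'
        field_simp
        ring_nf
        rw [show L * L ^ k * A * A ^ k * L⁻¹ * L⁻¹ ^ k * c ^ k * c⁻¹ ^ k
            = A * A ^ k * (L * L⁻¹) * (L * L⁻¹) ^ k * (c * c⁻¹) ^ k by ring,
          mul_inv_cancel₀ hLne, mul_inv_cancel₀ hcne]
        ring
    _ < δ := by
        rw [div_lt_iff₀ hL0]
        have : δ * (B/δ + 1) = B + δ := by field_simp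
        nlinarith
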